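/- Let i, j be nonnegative integers, x a complex number, and α, β complex numbers such that none of 2α−i, 2β−j, α+m−i+1/2 (0 ≤ m ≤ i), β+n−j+1/2 (0 ≤ n ≤ j), and α+β+m+n−i−j (0 ≤ m ≤ i, 0 ≤ n ≤ j) is a nonpositive integer, and such that (α−i−1/2)_m ≠ 0 for 0 ≤ m ≤ i and (β−j−1/2)_n ≠ 0 for 0 ≤ n ≤ j. Then ₁F₁(α; 2α−i; x) · ₁F₁(β; 2β−j; x) = e^x · Σ_{m=0}^{i} Σ_{n=0}^{j} [(−1)^{m+n} (−i)_m (−j)_n (2α−2i−1)_m (2β−2j−1)_n x^{m+n}] / [(2α−i)_m (2β−j)_n (α−i−1/2)_m (β−j−1/2)_n 2^{2m+2n} m! n!] · ₂F₃((α+β+m+n−i−j+1)/2, (α+β+m+n−i−j)/2; α+m−i+1/2, β+n−j+1/2, α+β+m+n−i−j; x²/4). -/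

import Mathlib

/-- Pochhammer symbol (rising factorial) `(c)_k = c (c+1) ⋯ (c+k-1)` for complex `c`. -/
noncomputable def poch (c : ℂ) (k : ℕ) : ℂ := ∏ l ∈ Finset.range k, (c + l)

/-- Generalized hypergeometric series `ₚF_q(a; b; x) = Σ_k (a₁)_k⋯(a_p)_k / ((b₁)_k⋯(b_q)_k) · x^k/k!`. -/
noncomputable def pFq (a b : List ℂ) (x : ℂ) : ℂ :=
  ∑' k : ℕ, ((a.map (fun c => poch c k)).prod / (b.map (fun c => poch c k)).prod)
    * x ^ k / (Nat.factorial k)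

/-- `c` is not a nonpositive integer, i.e. `c ≠ 0, -1, -2, …`. -/
def NotNonposInt (c : ℂ) : Prop := ∀ n : ℕ, c ≠ -(n : ℂ)

namespace Bailey

open Finset

lemma poch_zero (c : ℂ) : poch c 0 = 1 := by simp [poch]

lemma poch_succ (c : ℂ) (k : ℕ) : poch c (k+1) = poch c k * (c + k) := by
  simp [poch, Finset.prod_range_succ]

lemma poch_one (c : ℂ) : poch c 1 = c := by simp [poch]

lemma poch_add (c : ℂ) (m k : ℕ) : poch c (m + k) = poch c m * poch (c + m) k := by
  simp only [poch, Finset.prod_range_add]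
  congr 1
  refine Finset.prod_congr rfl fun l _ => ?_
  push_cast; ring

lemma poch_succ' (c : ℂ) (k : ℕ) : poch c (k+1) = c * poch (c+1) k := by
  have h := poch_add c 1 k
  rw [Nat.add_comm 1 k] at h
  rw [h, poch_one]
  norm_num

lemma nni_ne_zero {c : ℂ} (h : NotNonposInt c) : c ≠ 0 := by
  simpa using h 0

lemma nni_add_one {c : ℂ} (h : NotNonposInt c) : NotNonposInt (c + 1) := by
  intro n hn
  have : c = -((n+1 : ℕ) : ℂ) := by push_cast; linear_combination hn
  exact h (n+1) this

lemma nni_add_nat {c : ℂ} (h : NotNonposInt c) (k : ℕ) : NotNonposInt (c + k) := by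
  induction k with
  | zero => simpa using h
  | succ k ih =>
      intro n hn
      exact (nni_add_one ih) n (by push_cast at hn ⊢; linear_combination hn)

lemma nni_factor_ne {c : ℂ} (h : NotNonposInt c) (l : ℕ) : c + l ≠ 0 := by
  intro hl
  exact h l (by linear_combination hl)

lemma poch_ne_zero {c : ℂ} (h : NotNonposInt c) (k : ℕ) : poch c k ≠ 0 := by
  induction k with
  | zero => simp [poch_zero]
  | succ k ih => rw [poch_succ]; exact mul_ne_zero ih (nni_factor_ne h k)

lemma poch_eq_zero_of_lt (i m : ℕ) (h : i < m) : poch (-(i:ℂ)) m = 0 := by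
  apply Finset.prod_eq_zero (Finset.mem_range.mpr h)
  simp

lemma poch_reflect (c : ℂ) (k : ℕ) : poch c k = (-1)^k * poch (1 - c - k) k := by
  induction k generalizing c with
  | zero => simp [poch_zero]
  | succ k ih =>
      rw [poch_succ, ih]
      have h1 : poch (1 - c - ((k+1 : ℕ) : ℂ)) (k+1)
          = (1 - c - ((k+1:ℕ):ℂ)) * poch (1 - c - k) k := by
        rw [poch_succ']
        congr 1
        push_cast; ring
      rw [h1]
      push_cast; ring

lemma poch_lower (c : ℂ) (k : ℕ) : poch (c - 1) k * (c - 1 + k) = (c - 1) * poch c k := by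
  have h1 := poch_succ (c-1) k
  have h2 := poch_succ' (c-1) k
  rw [show c - 1 + 1 = c by ring] at h2
  linear_combination h1.symm.trans h2


noncomputable def ecoef (r : ℕ) : ℂ := (1/2)^r / r.factorial

noncomputable def bcz (r : ℤ) : ℂ := if 0 ≤ r then ecoef r.toNat else 0

noncomputable def Ecf (c : ℂ) (s : ℕ) : ℂ := 1 / (16^s * poch c s * s.factorial)

noncomputable def dcf (α : ℂ) (i m : ℕ) : ℂ :=
  ((-1)^m * poch (-(i:ℂ)) m * poch (2*α-2*i-1) m) /
    (poch (2*α-i) m * poch (α-i-1/2) m * 2^(2*m) * m.factorial)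

lemma ecoef_zero : ecoef 0 = 1 := by simp [ecoef]

lemma ecoef_succ (r : ℕ) : ecoef r = 2*(r+1)*ecoef (r+1) := by
  have h1 : ((r:ℂ)+1) ≠ 0 := Nat.cast_add_one_ne_zero r
  have h2 : (r.factorial : ℂ) ≠ 0 := Nat.cast_ne_zero.mpr (Nat.factorial_ne_zero r)
  rw [ecoef, ecoef, Nat.factorial_succ, pow_succ]
  push_cast
  field_simp

lemma bcz_natCast (n : ℕ) : bcz n = ecoef n := by simp [bcz]

lemma bcz_neg {r : ℤ} (h : r < 0) : bcz r = 0 := by simp [bcz, not_le.mpr h]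

lemma bcz_pred (r : ℤ) : bcz (r-1) = 2*(r:ℂ)*bcz r := by
  rcases le_or_gt r 0 with h | h
  · rcases lt_or_eq_of_le h with h' | h'
    · rw [bcz_neg h', bcz_neg (by omega)]; ring
    · subst h'; rw [bcz_neg (by omega)]; simp
  · have h0 : (0:ℤ) ≤ r - 1 := by omega
    have h1 : (0:ℤ) ≤ r := by omega
    rw [bcz, bcz, if_pos h0, if_pos h1]
    have hn : r.toNat = (r-1).toNat + 1 := by omega
    have hX : (((r-1).toNat : ℕ) : ℂ) = (r:ℂ) - 1 := by
      have h2 : (((r-1).toNat : ℕ) : ℤ) = r - 1 := Int.toNat_of_nonneg h0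
      exact_mod_cast congrArg (Int.cast : ℤ → ℂ) h2
    rw [hn, ecoef_succ ((r-1).toNat)]
    rw [hX]
    ring

lemma Ecf_zero (c : ℂ) : Ecf c 0 = 1 := by simp [Ecf, poch_zero]

lemma Ecf_succ (c : ℂ) (s : ℕ) : Ecf c (s+1) = Ecf c s / (16*(c+s)*(s+1)) := by
  rw [Ecf, Ecf, poch_succ, div_div]
  congr 1
  push_cast [Nat.factorial_succ]; ring

lemma Ecf_param (c : ℂ) (s : ℕ) : Ecf c (s+1) = Ecf (c+1) s / (16*c*(s+1)) := by
  rw [Ecf, Ecf, poch_succ', div_div]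
  congr 1
  push_cast [Nat.factorial_succ]; ring

lemma Ecf_shift {c : ℂ} (hc : NotNonposInt c) (s : ℕ) :
    (c+s) * Ecf (c+1) s = c * Ecf c s := by
  have hpc : poch c s ≠ 0 := poch_ne_zero hc s
  have hpc1 : poch (c+1) s ≠ 0 := poch_ne_zero (nni_add_one hc) s
  have hcross : c * poch (c+1) s = poch c s * (c+s) := by
    have h1 := poch_succ c s
    have h2 := poch_succ' c s
    linear_combination h2.symm.trans h1
  have h16 : (16:ℂ)^s ≠ 0 := pow_ne_zero _ (by norm_num)
  have hf : ((s.factorial : ℕ) : ℂ) ≠ 0 := Nat.cast_ne_zero.mpr (Nat.factorial_ne_zero s)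
  rw [Ecf, Ecf]
  field_simp
  linear_combination (-1:ℂ) * hcross

lemma R1succ {c : ℂ} (hc : NotNonposInt c) (hc1 : c - 1 ≠ 0) (s : ℕ) :
    Ecf c (s+1) = Ecf (c-1) (s+1) - Ecf (c+1) s / (16*c*(c-1)) := by
  have hc0 : c ≠ 0 := nni_ne_zero hc
  have hs1 : ((s:ℂ)+1) ≠ 0 := Nat.cast_add_one_ne_zero s
  have h1 : Ecf (c-1) (s+1) = Ecf c s / (16*(c-1)*(s+1)) := by
    have h := Ecf_param (c-1) s
    rwa [show c - 1 + 1 = c by ring] at h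
  have h2 : Ecf c (s+1) = Ecf (c+1) s / (16*c*(s+1)) := Ecf_param c s
  have h3 := Ecf_shift hc s
  have hX : (16*(c-1)*((s:ℂ)+1)) ≠ 0 := by
    exact mul_ne_zero (mul_ne_zero (by norm_num) hc1) hs1
  have hY : (16*c*(c-1)) ≠ 0 := mul_ne_zero (mul_ne_zero (by norm_num) hc0) hc1
  have hZ : (16*c*((s:ℂ)+1)) ≠ 0 := mul_ne_zero (mul_ne_zero (by norm_num) hc0) hs1
  rw [h1, h2, div_sub_div _ _ hX hY, div_eq_div_iff hZ (mul_ne_zero hX hY)]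
  linear_combination (256*c*(c-1)*((s:ℂ)+1)) * h3

lemma dcf_zero (α : ℂ) (i : ℕ) : dcf α i 0 = 1 := by
  simp [dcf, poch_zero]

lemma dcf_vanish (α : ℂ) {i m : ℕ} (h : i < m) : dcf α i m = 0 := by
  rw [dcf, poch_eq_zero_of_lt i m h]
  simp
lemma poch_down1 (c : ℂ) (k : ℕ) : poch (c-1) (k+1) = (c-1) * poch c k := by
  have h := poch_succ' (c-1) k
  rwa [show c-1+1 = c by ring] at h

lemma poch_down2 (c : ℂ) (k : ℕ) : poch (c-2) (k+2) = (c-2)*((c-1) * poch c k) := by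
  have h1 : poch (c-2) (k+2) = (c-2) * poch (c-1) (k+1) := by
    have h := poch_succ' (c-2) (k+1)
    rwa [show c-2+1 = c-1 by ring] at h
  rw [h1, poch_down1]

lemma dcf_step (α : ℂ) (i m : ℕ) :
    dcf α i (m+1) = dcf α i m *
      ((-(((-(i:ℂ))+m)*(2*α-2*i-1+m))) / ((2*α-i+m)*((α-i-1/2+m)*(4*((m:ℂ)+1))))) := by
  rw [dcf, dcf, div_mul_div_comm, poch_succ, poch_succ, poch_succ, poch_succ,
      Nat.factorial_succ, show 2*(m+1) = 2*m+2 by omega]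
  simp only [pow_add, pow_one]
  congr 1 <;> push_cast <;> ring

lemma dcf_top (α : ℂ) (i v : ℕ) :
    dcf α (i+1) (v+2) = dcf α i v *
      ((((-(i:ℂ))-1)*(((-(i:ℂ))+v)*((2*α-2*i-3)*(2*α-2*i-2)))) /
       ((2*α-i-1)*((2*α-i+v)*((α-i-3/2)*((α-i-1/2+v)*(16*((((v:ℂ)+2)*((v:ℂ)+1))))))))) := by
  have eP : poch (-(((i+1):ℕ)):ℂ) (v+2) = ((-(i:ℂ))-1) * (poch (-(i:ℂ)) v * ((-(i:ℂ))+v)) := by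
    rw [show (-((((i+1):ℕ)):ℂ)) = ((-(i:ℂ))-1) by push_cast; ring]
    rw [show v+2 = (v+1)+1 from rfl, poch_down1, poch_succ]
  have eQ : poch (2*α-2*(((i+1):ℕ))-1) (v+2)
      = ((2*α-2*i-1)-2)*(((2*α-2*i-1)-1) * poch (2*α-2*i-1) v) := by
    rw [show (2*α-2*((((i+1):ℕ)):ℂ)-1) = ((2*α-2*i-1)-2) by push_cast; ring]
    rw [poch_down2]
  have eS : poch (2*α-(((i+1):ℕ))) (v+2) = ((2*α-i)-1) * (poch (2*α-i) v * (2*α-i+v)) := by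
    rw [show (2*α-((((i+1):ℕ)):ℂ)) = ((2*α-i)-1) by push_cast; ring]
    rw [show v+2 = (v+1)+1 from rfl, poch_down1, poch_succ]
  have eR : poch (α-(((i+1):ℕ))-1/2) (v+2)
      = ((α-i-1/2)-1) * (poch (α-i-1/2) v * (α-i-1/2+v)) := by
    rw [show (α-((((i+1):ℕ)):ℂ)-1/2) = ((α-i-1/2)-1) by push_cast; ring]
    rw [show v+2 = (v+1)+1 from rfl, poch_down1, poch_succ]
  rw [dcf, dcf, div_mul_div_comm, eP, eQ, eS, eR,
      show (v+2).factorial = (v+2)*((v+1)*v.factorial) by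
        rw [Nat.factorial_succ, Nat.factorial_succ],
      show 2*(v+2) = 2*v+4 by omega]
  simp only [pow_add]
  congr 1 <;> push_cast <;> ring

lemma cancel3 (n d r : ℂ) (hd : d ≠ 0) : (n/d)*(d*r) = n*r := by
  field_simp

lemma scalar_abstract (B M S0 S1 R0 R1 V1 V2 NL n0 n1 A2 CB : ℂ)
    (hB : B ≠ 0) (hM : M ≠ 0) (hS0 : S0 ≠ 0) (hS1 : S1 ≠ 0) (hR0 : R0 ≠ 0)
    (hR1 : R1 ≠ 0) (hV1 : V1 ≠ 0) (hV2 : V2 ≠ 0)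
    (hpoly : B*NL*(16*(S1*R1)) = A2*(n0*n1)*(16*(B*M)) + n0*(32*(B*(M*(S1*(R1*V2)))))
        + (-CB)*(16*(B*(M*(S0*(S1*(V1*V2)))))) + 32*(B*(M*(S0*(S1*(R0*(V1*V2))))))) :
    B*(NL/(B*(S0*(M*(R0*(16*(V2*V1)))))))
      = A2*((n0/(S0*(R0*(4*V1))))*(n1/(S1*(R1*(4*V2)))))
        + (1/2)*(n0/(S0*(R0*(4*V1))))
        + (-CB/(16*(R1*R0)) + 1/(8*R1)) := by
  have hD : (256*(B*(M*(S0*(S1*(R0*(R1*(V1*V2)))))))) ≠ 0 := by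
    refine mul_ne_zero (by norm_num) (mul_ne_zero hB (mul_ne_zero hM (mul_ne_zero hS0
      (mul_ne_zero hS1 (mul_ne_zero hR0 (mul_ne_zero hR1 (mul_ne_zero hV1 hV2)))))))
  have h0 := cancel3 NL (B*(S0*(M*(R0*(16*(V2*V1)))))) (16*(S1*R1))
    (mul_ne_zero hB (mul_ne_zero hS0 (mul_ne_zero hM (mul_ne_zero hR0
      (mul_ne_zero (by norm_num) (mul_ne_zero hV2 hV1))))))
  have h1 := cancel3 (n0*n1) ((S0*(R0*(4*V1)))*(S1*(R1*(4*V2)))) (16*(B*M))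
    (mul_ne_zero (mul_ne_zero hS0 (mul_ne_zero hR0 (mul_ne_zero (by norm_num) hV1)))
      (mul_ne_zero hS1 (mul_ne_zero hR1 (mul_ne_zero (by norm_num) hV2))))
  have h2 := cancel3 n0 (S0*(R0*(4*V1))) (64*(B*(M*(S1*(R1*V2)))))
    (mul_ne_zero hS0 (mul_ne_zero hR0 (mul_ne_zero (by norm_num) hV1)))
  have h3 := cancel3 CB (16*(R1*R0)) (16*(B*(M*(S0*(S1*(V1*V2))))))
    (mul_ne_zero (by norm_num) (mul_ne_zero hR1 hR0))
  have h4 := cancel3 1 (8*R1) (32*(B*(M*(S0*(S1*(R0*(V1*V2)))))))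
    (mul_ne_zero (by norm_num) hR1)
  apply mul_right_cancel₀ hD
  linear_combination B*h0 + hpoly - A2*h1 - (1/2)*h2 + h3 - h4

lemma loc2_zero (α : ℂ) (i : ℕ) :
    (2*α - i - 1) * dcf α (i+1) 0 = (2*α - i - 1) * dcf α i 0 := by
  rw [dcf_zero, dcf_zero]

lemma scalar_one (B M S R n1 n0 : ℂ) (hB : B ≠ 0) (hM : M ≠ 0) (hS : S ≠ 0) (hR : R ≠ 0)
    (hpoly : B*(n1*(4*(S*R))) = (B+1)*(n0*(4*(B*M))) + 8*(B*(M*(S*R)))) :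
    B*(n1/(B*(M*4))) = (B+1)*(n0/(S*(R*4))) + 1/2 := by
  have hD : ((B*(M*4))*(4*(S*R))) ≠ 0 :=
    mul_ne_zero (mul_ne_zero hB (mul_ne_zero hM (by norm_num)))
      (mul_ne_zero (by norm_num) (mul_ne_zero hS hR))
  have c1 := cancel3 n1 (B*(M*4)) (4*(S*R))
    (mul_ne_zero hB (mul_ne_zero hM (by norm_num)))
  have c2 := cancel3 n0 (S*(R*4)) (4*(B*M))
    (mul_ne_zero hS (mul_ne_zero hR (by norm_num)))
  apply mul_right_cancel₀ hD
  linear_combination B*c1 + hpoly - (B+1)*c2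

lemma loc2_one (α : ℂ) (i : ℕ)
    (h2a : NotNonposInt (2*α - i - 1)) (hga : NotNonposInt (α - i - 3/2)) :
    (2*α - i - 1) * dcf α (i+1) 1 = (2*α - i - 1 + 1) * dcf α i 1 + (1/2) * dcf α i 0 := by
  have h2b : NotNonposInt (2*α - i) := by
    rw [show 2*α - (i:ℂ) = (2*α - i - 1) + 1 by ring]; exact nni_add_one h2a
  have hgb : NotNonposInt (α - i - 1/2) := by
    rw [show α - (i:ℂ) - 1/2 = (α - i - 3/2) + 1 by ring]; exact nni_add_one hga
  have hb0 : (2*α - i - 1) ≠ 0 := nni_ne_zero h2a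
  have hm0 : (α - i - 3/2) ≠ 0 := nni_ne_zero hga
  have hs : (2*α - i) ≠ 0 := nni_ne_zero h2b
  have hr : (α - i - 1/2) ≠ 0 := nni_ne_zero hgb
  have t1 := dcf_step α i 0
  have t2 := dcf_step α (i+1) 0
  rw [t1, t2, dcf_zero, dcf_zero]
  have SC := scalar_one (2*α-i-1) (α-i-3/2) (2*α-i) (α-i-1/2)
    (-(((-(i:ℂ))-1)*(2*α-2*i-3))) (-(((-(i:ℂ)))*(2*α-2*i-1)))
    hb0 hm0 hs hr (by ring)
  push_cast
  linear_combination SC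

set_option maxHeartbeats 1000000 in
lemma loc2_main (α : ℂ) (i v : ℕ)
    (h2a : NotNonposInt (2*α - i - 1)) (hga : NotNonposInt (α - i - 3/2)) :
    (2*α - i - 1) * dcf α (i+1) (v+2)
      = (2*α - i - 1 + (v+2)) * dcf α i (v+2) + (1/2) * dcf α i (v+1)
        + (-(2*α - i - 1 + v) / (16*((α-i-1/2+v+1)*(α-i-1/2+v)))
           + 1/(8*(α-i-1/2+v+1))) * dcf α i v := by
  have h2b : NotNonposInt (2*α - i) := by
    rw [show 2*α - (i:ℂ) = (2*α - i - 1) + 1 by ring]; exact nni_add_one h2a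
  have hgb : NotNonposInt (α - i - 1/2) := by
    rw [show α - (i:ℂ) - 1/2 = (α - i - 3/2) + 1 by ring]; exact nni_add_one hga
  have hb0 : (2*α - i - 1) ≠ 0 := nni_ne_zero h2a
  have hm0 : (α - i - 3/2) ≠ 0 := nni_ne_zero hga
  have hs0 : (2*α - i + v) ≠ 0 := nni_factor_ne h2b v
  have hs1 : (2*α - i + v + 1) ≠ 0 := by
    have := nni_factor_ne h2b (v+1); intro h; apply this; push_cast; linear_combination h
  have hr0 : (α - i - 1/2 + v) ≠ 0 := nni_factor_ne hgb v
  have hr1 : (α - i - 1/2 + v + 1) ≠ 0 := by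
    have := nni_factor_ne hgb (v+1); intro h; apply this; push_cast; linear_combination h
  have hv1 : ((v:ℂ)+1) ≠ 0 := Nat.cast_add_one_ne_zero v
  have hv2 : ((v:ℂ)+2) ≠ 0 := by
    have h := Nat.cast_ne_zero (R := ℂ).mpr (show v+2 ≠ 0 by omega)
    intro hh; apply h; push_cast; linear_combination hh
  have t1 := dcf_step α i v
  have t2 : dcf α i (v+2) = dcf α i (v+1) *
      ((-(((-(i:ℂ))+(v+1))*(2*α-2*i-1+(v+1)))) /
        ((2*α-i+(v+1))*((α-i-1/2+(v+1))*(4*(((v:ℂ)+1)+1))))) := by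
    have h := dcf_step α i (v+1)
    rw [show ((((v+1):ℕ)):ℂ) = (v:ℂ)+1 by push_cast; ring] at h
    exact h
  have t3 := dcf_top α i v
  have SC := scalar_abstract (2*α-i-1) (α-i-3/2) (2*α-i+v) (2*α-i+v+1)
    (α-i-1/2+v) (α-i-1/2+v+1) ((v:ℂ)+1) ((v:ℂ)+2)
    ((((-(i:ℂ))-1)*(((-(i:ℂ))+v)*((2*α-2*i-3)*(2*α-2*i-2)))))
    (-(((-(i:ℂ))+v)*(2*α-2*i-1+v)))
    (-(((-(i:ℂ))+v+1)*(2*α-2*i-1+v+1)))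
    (2*α-i-1+(v+2)) (2*α-i-1+v)
    hb0 hm0 hs0 hs1 hr0 hr1 hv1 hv2 (by ring)
  linear_combination (2*α-i-1) * t3 + (dcf α i v) * SC
    - (2*α-i-1+((v:ℂ)+2)) * t2
    - ((2*α-i-1+((v:ℂ)+2)) * ((-(((-(i:ℂ))+(v+1))*(2*α-2*i-1+(v+1)))) /
        ((2*α-i+(v+1))*((α-i-1/2+(v+1))*(4*(((v:ℂ)+1)+1))))) + 1/2) * t1
lemma tsum_shift_s (F : ℕ×ℕ → ℂ) (h0 : ∀ u, F (u, 0) = 0) :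
    ∑' p : ℕ×ℕ, F p = ∑' p : ℕ×ℕ, F (p.1, p.2+1) := by
  apply tsum_eq_tsum_of_ne_zero_bij (fun x => (x.1.1, x.1.2+1))
  · intro x y hxy
    simp only [Prod.mk.injEq] at hxy
    exact Subtype.ext (Prod.ext hxy.1 (by omega))
  · intro p hp
    rcases p with ⟨u, s⟩
    rcases s with _ | s'
    · exact absurd (h0 u) hp
    · exact ⟨⟨(u, s'), hp⟩, rfl⟩
  · intro x; rfl

lemma tsum_shift_u (k : ℕ) (F : ℕ×ℕ → ℂ) (h0 : ∀ p : ℕ×ℕ, p.1 < k → F p = 0) :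
    ∑' p : ℕ×ℕ, F p = ∑' p : ℕ×ℕ, F (p.1+k, p.2) := by
  apply tsum_eq_tsum_of_ne_zero_bij (fun x => (x.1.1+k, x.1.2))
  · intro x y hxy
    simp only [Prod.mk.injEq] at hxy
    exact Subtype.ext (Prod.ext (by omega) hxy.2)
  · intro p hp
    rcases p with ⟨u, s⟩
    by_cases hu : u < k
    · exact absurd (h0 (u, s) hu) hp
    · refine ⟨⟨(u - k, s), ?_⟩, ?_⟩
      · simpa [Nat.sub_add_cancel (le_of_not_gt hu)] using hp
      · simp [Nat.sub_add_cancel (le_of_not_gt hu)]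
  · intro x; rfl

lemma tsum_collapse (F : ℕ×ℕ → ℂ) (h0 : ∀ p : ℕ×ℕ, p.1 ≠ 0 → F p = 0) :
    ∑' p : ℕ×ℕ, F p = ∑' s : ℕ, F (0, s) := by
  apply tsum_eq_tsum_of_ne_zero_bij (fun x => ((0:ℕ), x.1))
  · intro x y hxy
    simp only [Prod.mk.injEq] at hxy
    exact Subtype.ext hxy.2
  · intro p hp
    rcases p with ⟨u, s⟩
    by_cases hu : u = 0
    · subst hu; exact ⟨⟨s, hp⟩, rfl⟩
    · exact absurd (h0 (u, s) hu) hp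
  · intro x; rfl

lemma tele (f : ℕ → ℂ) (S : ℕ) (hf : ∀ s, S ≤ s → f s = 0) :
    ∑' s : ℕ, (f (s+1) - f s) = - f 0 := by
  have h1 : ∀ b ∉ Finset.range S, f (b+1) - f b = 0 := by
    intro b hb
    simp only [Finset.mem_range, not_lt] at hb
    rw [hf b hb, hf (b+1) (by omega)]
    ring
  rw [tsum_eq_sum h1, Finset.sum_range_sub, hf S le_rfl]
  ring

lemma summable_guard (N : ℕ) (F : ℕ×ℕ → ℂ)
    (h : ∀ p : ℕ×ℕ, (N:ℤ) - p.1 - 2*p.2 < 0 → F p = 0) : Summable F := by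
  apply summable_of_ne_finset_zero (s := Finset.range (N+1) ×ˢ Finset.range (N+1))
  intro p hp
  apply h
  simp only [Finset.mem_product, Finset.mem_range, not_and_or, not_lt] at hp
  omega

lemma summable_guard1 (N : ℕ) (f : ℕ → ℂ)
    (h : ∀ s : ℕ, (N:ℤ) - 2*s < 0 → f s = 0) : Summable f := by
  apply summable_of_ne_finset_zero (s := Finset.range (N+1))
  intro s hs
  apply h
  simp only [Finset.mem_range, not_lt] at hs
  omega
noncomputable def gam (α : ℂ) (i u : ℕ) : ℂ := α + u - i + 1/2

noncomputable def Kf (α : ℂ) (M : ℤ) : ℂ := ∑' s : ℕ, Ecf (α+1/2) s * bcz (M - 2*s)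

noncomputable def Vterm (α : ℂ) (i N : ℕ) (p : ℕ×ℕ) : ℂ :=
  dcf α i p.1 * Ecf (gam α i p.1) p.2 * bcz ((N:ℤ) - p.1 - 2*p.2)

noncomputable def Vc (α : ℂ) (i N : ℕ) : ℂ := ∑' p : ℕ×ℕ, Vterm α i N p

lemma krec (α : ℂ) (hc : NotNonposInt (α+1/2)) (N : ℕ) :
    ((N:ℂ)+1)*(2*α+N)*Kf α ((N:ℤ)+1) = (α+N)*Kf α (N:ℤ) := by
  set c : ℂ := α + 1/2 with hcdef
  set G : ℕ → ℂ := fun s => (-4)*s*(α+s-1/2)*Ecf c s * bcz ((N:ℤ)+1-2*s) with hGdef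
  have hG0 : G 0 = 0 := by simp [hGdef]
  have hGvan : ∀ s, N+2 ≤ s → G s = 0 := by
    intro s hs
    have : ((N:ℤ)+1-2*s) < 0 := by omega
    simp [hGdef, bcz_neg this]
  have hsum1 : Summable (fun s : ℕ => Ecf c s * bcz ((N:ℤ)+1-2*s)) := by
    apply summable_guard1 (N+1)
    intro s hs
    rw [bcz_neg (by omega : (N:ℤ)+1-2*(s:ℕ) < 0)]
    ring
  have hsum0 : Summable (fun s : ℕ => Ecf c s * bcz ((N:ℤ)-2*s)) := by
    apply summable_guard1 N
    intro s hs
    rw [bcz_neg (by omega : (N:ℤ)-2*(s:ℕ) < 0)]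
    ring
  have key : ∀ s : ℕ, ((N:ℂ)+1)*(2*α+N)*(Ecf c s * bcz ((N:ℤ)+1-2*s))
      - (α+(N:ℂ))*(Ecf c s * bcz ((N:ℤ)-2*s)) = G (s+1) - G s := by
    intro s
    have hcs : c + s ≠ 0 := nni_factor_ne hc s
    have hs1 : ((s:ℂ)+1) ≠ 0 := Nat.cast_add_one_ne_zero s
    have e1' : 16*(c+s)*((s:ℂ)+1)*Ecf c (s+1) = Ecf c s := by
      rw [Ecf_succ]
      field_simp
    have b1 : bcz ((N:ℤ)-2*(s:ℕ)) = 2*(((N:ℤ)+1-2*s : ℤ):ℂ)*bcz ((N:ℤ)+1-2*s) := by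
      rw [show (N:ℤ)-2*(s:ℕ) = ((N:ℤ)+1-2*(s:ℕ))-1 by ring, bcz_pred]
    have b2 : bcz ((N:ℤ)+1-2*(((s+1):ℕ):ℤ))
        = 2*(((N:ℤ)-2*s : ℤ):ℂ)*(2*(((N:ℤ)+1-2*s : ℤ):ℂ)*bcz ((N:ℤ)+1-2*s)) := by
      rw [show ((N:ℤ)+1-2*(((s+1):ℕ):ℤ)) = ((N:ℤ)-2*(s:ℕ))-1 by push_cast; ring, bcz_pred, b1]
    simp only [hGdef]
    rw [b2, b1]
    push_cast
    linear_combination ((((N:ℂ)-2*s))*(((N:ℂ)+1-2*s))*bcz ((N:ℤ)+1-2*s)) * e1'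
  have S1 : Summable (fun s : ℕ => ((N:ℂ)+1)*(2*α+N)*(Ecf c s * bcz ((N:ℤ)+1-2*s))) :=
    hsum1.mul_left _
  have S0 : Summable (fun s : ℕ => (α+(N:ℂ))*(Ecf c s * bcz ((N:ℤ)-2*s))) :=
    hsum0.mul_left _
  have comb : ((N:ℂ)+1)*(2*α+N)*Kf α ((N:ℤ)+1) - (α+N)*Kf α (N:ℤ)
      = ∑' s : ℕ, (G (s+1) - G s) := by
    rw [Kf, Kf, ← tsum_mul_left, ← tsum_mul_left, ← S1.tsum_sub S0]
    exact tsum_congr key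
  have htel := tele G (N+2) hGvan
  rw [htel, hG0] at comb
  have hz : ((N:ℂ)+1)*(2*α+N)*Kf α ((N:ℤ)+1) - (α+N)*Kf α (N:ℤ) = 0 := by
    rw [comb]; ring
  linear_combination hz

lemma kf_zero (α : ℂ) : Kf α (0:ℤ) = 1 := by
  rw [Kf]
  rw [tsum_eq_sum (s := {0}) (by
    intro s hs
    simp only [Finset.mem_singleton] at hs
    rw [bcz_neg (by omega : (0:ℤ)-2*(s:ℕ) < 0)]
    ring)]
  simp [Ecf_zero, bcz, ecoef_zero]

lemma kummer (α : ℂ) (h2 : NotNonposInt (2*α)) (hc : NotNonposInt (α+1/2)) :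
    ∀ N : ℕ, poch α N = Kf α (N:ℤ) * poch (2*α) N * N.factorial := by
  intro N
  induction N with
  | zero => simp [poch_zero, kf_zero]
  | succ N ih =>
      have hrec := krec α hc N
      have e1 : poch α (N+1) = poch α N * (α+N) := poch_succ α N
      have e2 : poch (2*α) (N+1) = poch (2*α) N * (2*α+N) := poch_succ (2*α) N
      rw [e1, e2, ih, show (((N+1):ℕ):ℤ) = (N:ℤ)+1 by push_cast; ring,
          show (((N+1)).factorial : ℂ) = ((N:ℂ)+1) * (N.factorial:ℂ) by
            rw [Nat.factorial_succ]; push_cast; ring]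
      linear_combination (-(poch (2*α) N * (N.factorial:ℂ))) * hrec
noncomputable def fA1 (α : ℂ) (i N : ℕ) (p : ℕ×ℕ) : ℂ :=
  (2*α-i-1+p.1) * dcf α i p.1 * Ecf (gam α (i+1) p.1) p.2 * bcz ((N:ℤ)-p.1-2*p.2)

noncomputable def fA2 (α : ℂ) (i N : ℕ) (p : ℕ×ℕ) : ℂ :=
  (2*α-i-1+p.1) * dcf α i p.1 / (16 * gam α (i+1) (p.1+1) * gam α (i+1) p.1)
    * (if p.2 = 0 then 0 else Ecf (gam α (i+1) (p.1+2)) (p.2-1)) * bcz ((N:ℤ)-p.1-2*p.2)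

noncomputable def fA2' (α : ℂ) (i N : ℕ) (p : ℕ×ℕ) : ℂ :=
  (2*α-i-1+p.1) * dcf α i p.1 / (16 * gam α (i+1) (p.1+1) * gam α (i+1) p.1)
    * Ecf (gam α (i+1) (p.1+2)) p.2 * bcz ((N:ℤ)-(p.1+2)-2*p.2)

noncomputable def hA2 (α : ℂ) (i N : ℕ) (p : ℕ×ℕ) : ℂ :=
  if p.1 < 2 then 0 else
    (2*α-i-1+((p.1-2 : ℕ):ℂ)) * dcf α i (p.1-2)
      / (16 * gam α (i+1) (p.1-1) * gam α (i+1) (p.1-2))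
      * Ecf (gam α (i+1) p.1) p.2 * bcz ((N:ℤ)-p.1-2*p.2)

noncomputable def g1 (α : ℂ) (i N : ℕ) (p : ℕ×ℕ) : ℂ :=
  (2*α-i-1+p.1) * dcf α i p.1 * Ecf (gam α (i+1) (p.1+1)) p.2 * bcz ((N:ℤ)-p.1-2*p.2)

noncomputable def g2 (α : ℂ) (i N : ℕ) (p : ℕ×ℕ) : ℂ :=
  2*p.2 * dcf α i p.1 * Ecf (gam α (i+1) (p.1+1)) p.2 * bcz ((N:ℤ)-p.1-2*p.2)

noncomputable def g2' (α : ℂ) (i N : ℕ) (p : ℕ×ℕ) : ℂ :=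
  dcf α i p.1 / (8 * gam α (i+1) (p.1+1)) * Ecf (gam α (i+1) (p.1+2)) p.2
    * bcz ((N:ℤ)-(p.1+2)-2*p.2)

noncomputable def h2f (α : ℂ) (i N : ℕ) (p : ℕ×ℕ) : ℂ :=
  if p.1 < 2 then 0 else
    dcf α i (p.1-2) / (8 * gam α (i+1) (p.1-1)) * Ecf (gam α (i+1) p.1) p.2
      * bcz ((N:ℤ)-p.1-2*p.2)

noncomputable def g3 (α : ℂ) (i N : ℕ) (p : ℕ×ℕ) : ℂ :=
  ((N:ℂ)-p.1-2*p.2) * dcf α i p.1 * Ecf (gam α (i+1) (p.1+1)) p.2 * bcz ((N:ℤ)-p.1-2*p.2)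

noncomputable def g3' (α : ℂ) (i N : ℕ) (p : ℕ×ℕ) : ℂ :=
  (1/2) * dcf α i p.1 * Ecf (gam α (i+1) (p.1+1)) p.2 * bcz ((N:ℤ)-(p.1+1)-2*p.2)

noncomputable def h3f (α : ℂ) (i N : ℕ) (p : ℕ×ℕ) : ℂ :=
  if p.1 = 0 then 0 else
    (1/2) * dcf α i (p.1-1) * Ecf (gam α (i+1) p.1) p.2 * bcz ((N:ℤ)-p.1-2*p.2)

set_option maxHeartbeats 1600000 in
lemma step_lemma (α : ℂ) (i : ℕ) (h2a : NotNonposInt (2*α - i - 1))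
    (hga : NotNonposInt (α - i - 3/2)) (N : ℕ) :
    (2*α - i - 1 + N) * Vc α i N = (2*α - i - 1) * Vc α (i+1) N := by
  have hgam : ∀ u : ℕ, NotNonposInt (gam α (i+1) u) := by
    intro u
    rw [show gam α (i+1) u = (α - i - 3/2) + ((u+1 : ℕ):ℂ) by rw [gam]; push_cast; ring]
    exact nni_add_nat hga (u+1)
  have hgam_ne : ∀ u, gam α (i+1) u ≠ 0 := fun u => nni_ne_zero (hgam u)
  have ggam : ∀ u : ℕ, gam α i u = gam α (i+1) (u+1) := by
    intro u; rw [gam, gam]; push_cast; ring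
  have gsucc : ∀ u : ℕ, gam α (i+1) (u+1) = gam α (i+1) u + 1 := by
    intro u; rw [gam, gam]; push_cast; ring
  -- summability
  have sumV : ∀ (F : ℕ×ℕ → ℂ) (c : ℕ×ℕ → ℂ),
      (∀ p, F p = c p * bcz ((N:ℤ)-p.1-2*p.2)) → Summable F := by
    intro F c hF
    apply summable_guard N
    intro p hp
    rw [hF p, bcz_neg hp, mul_zero]
  have SfA1 : Summable (fA1 α i N) := sumV _ _ (fun p => rfl)
  have SfA2 : Summable (fA2 α i N) := sumV _ _ (fun p => rfl)
  have SfA2' : Summable (fA2' α i N) := by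
    apply summable_guard N
    intro p hp
    rw [fA2', bcz_neg (by omega), mul_zero]
  have ShA2 : Summable (hA2 α i N) := by
    apply summable_guard N
    intro p hp
    rw [hA2]
    split
    · rfl
    · rw [bcz_neg hp, mul_zero]
  have Sg1 : Summable (g1 α i N) := sumV _ _ (fun p => rfl)
  have Sg2 : Summable (g2 α i N) := sumV _ _ (fun p => rfl)
  have Sg2' : Summable (g2' α i N) := by
    apply summable_guard N
    intro p hp
    rw [g2', bcz_neg (by omega), mul_zero]
  have Sh2 : Summable (h2f α i N) := by
    apply summable_guard N
    intro p hp
    rw [h2f]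
    split
    · rfl
    · rw [bcz_neg hp, mul_zero]
  have Sg3 : Summable (g3 α i N) := sumV _ _ (fun p => rfl)
  have Sg3' : Summable (g3' α i N) := by
    apply summable_guard N
    intro p hp
    rw [g3', bcz_neg (by omega), mul_zero]
  have Sh3 : Summable (h3f α i N) := by
    apply summable_guard N
    intro p hp
    rw [h3f]
    split
    · rfl
    · rw [bcz_neg hp, mul_zero]
  -- split
  have split1 : ∀ p : ℕ×ℕ, (2*α-i-1+(N:ℂ)) * Vterm α i N p
      = g1 α i N p + g2 α i N p + g3 α i N p := by
    rintro ⟨u, s⟩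
    simp only [Vterm, g1, g2, g3]
    rw [ggam u]
    push_cast
    ring
  -- g3 chain
  have e3 : ∀ p : ℕ×ℕ, g3 α i N p = g3' α i N p := by
    rintro ⟨u, s⟩
    simp only [g3, g3']
    have hb := bcz_pred ((N:ℤ)-u-2*s)
    rw [show ((N:ℤ)-(↑u+1)-2*(s:ℕ)) = ((N:ℤ)-↑u-2*(s:ℕ))-1 by push_cast; ring, hb]
    push_cast
    ring
  have e3' : ∑' p, g3' α i N p = ∑' p, h3f α i N p := by
    rw [tsum_shift_u 1 (h3f α i N) (by
      rintro ⟨u, s⟩ hu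
      simp only [h3f]
      rw [if_pos (by omega)])]
    apply tsum_congr
    rintro ⟨u, s⟩
    simp only [h3f, g3', Nat.add_sub_cancel]
    rw [if_neg (by omega)]
    push_cast
    ring_nf
  -- g2 chain
  have e2a : ∑' p, g2 α i N p = ∑' p : ℕ×ℕ, g2 α i N (p.1, p.2+1) :=
    tsum_shift_s _ (by
      intro u
      simp only [g2]
      push_cast
      ring)
  have e2b : ∀ p : ℕ×ℕ, g2 α i N (p.1, p.2+1) = g2' α i N p := by
    rintro ⟨u, s⟩
    simp only [g2, g2']
    rw [Ecf_param (gam α (i+1) (u+1)) s, ← gsucc (u+1)]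
    rw [show ((N:ℤ)-↑u-2*(((s+1):ℕ):ℤ)) = ((N:ℤ)-(↑u+2)-2*(s:ℕ)) by push_cast; ring]
    have hs1 : ((s:ℂ)+1) ≠ 0 := Nat.cast_add_one_ne_zero s
    have hgne := hgam_ne (u+1)
    push_cast
    field_simp
    ring
  have e2c : ∑' p, g2' α i N p = ∑' p, h2f α i N p := by
    rw [tsum_shift_u 2 (h2f α i N) (by
      rintro ⟨u, s⟩ hu
      simp only [h2f]
      rw [if_pos hu])]
    apply tsum_congr
    rintro ⟨u, s⟩
    simp only [h2f, g2']
    rw [if_neg (by omega), show u+2-1 = u+1 from rfl, show u+2-2 = u from rfl]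
    push_cast
    ring
  -- g1 chain
  have e1a : ∀ p : ℕ×ℕ, g1 α i N p = fA1 α i N p - fA2 α i N p := by
    rintro ⟨u, s⟩
    rcases s with _ | s'
    · simp only [g1, fA1, fA2, Ecf_zero]
      norm_num
    · have hc1 : gam α (i+1) (u+1) - 1 = gam α (i+1) u := by rw [gsucc]; ring
      have R := R1succ (hgam (u+1)) (by rw [hc1]; exact hgam_ne u) s'
      rw [hc1, ← gsucc (u+1)] at R
      simp only [g1, fA1, fA2, if_neg (Nat.succ_ne_zero s'), Nat.add_sub_cancel]
      rw [R]
      ring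
  have e1b : ∑' p, fA2 α i N p = ∑' p, fA2' α i N p := by
    rw [tsum_shift_s (fA2 α i N) (by
      intro u
      simp only [fA2]
      norm_num)]
    apply tsum_congr
    rintro ⟨u, s⟩
    simp only [fA2, fA2', if_neg (Nat.succ_ne_zero s), Nat.add_sub_cancel]
    rw [show ((N:ℤ)-↑u-2*(((s+1):ℕ):ℤ)) = ((N:ℤ)-(↑u+2)-2*(s:ℕ)) by push_cast; ring]
  have e1c : ∑' p, fA2' α i N p = ∑' p, hA2 α i N p := by
    rw [tsum_shift_u 2 (hA2 α i N) (by
      rintro ⟨u, s⟩ hu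
      simp only [hA2]
      rw [if_pos hu])]
    apply tsum_congr
    rintro ⟨u, s⟩
    simp only [hA2, fA2']
    rw [if_neg (by omega), show u+2-1 = u+1 from rfl, show u+2-2 = u from rfl]
    push_cast
    ring
  -- final pointwise identity
  have final : ∀ p : ℕ×ℕ, fA1 α i N p - hA2 α i N p + (h2f α i N p + h3f α i N p)
      = (2*α-i-1) * Vterm α (i+1) N p := by
    rintro ⟨u, s⟩
    match u with
    | 0 =>
        have lz := loc2_zero α i
        simp only [fA1, hA2, h2f, h3f, Vterm, if_pos (by omega : (0:ℕ) < 2), if_pos rfl]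
        push_cast
        linear_combination (-(Ecf (gam α (i+1) 0) s * bcz ((N:ℤ)-((0:ℕ):ℤ)-2*s))) * lz
    | 1 =>
        have lo := loc2_one α i h2a hga
        simp only [fA1, hA2, h2f, h3f, Vterm, if_pos (by omega : (1:ℕ) < 2),
          if_neg (by omega : (1:ℕ) ≠ 0)]
        push_cast
        linear_combination (-(Ecf (gam α (i+1) 1) s * bcz ((N:ℤ)-((1:ℕ):ℤ)-2*s))) * lo
    | (v+2) =>
        have lm := loc2_main α i v h2a hga
        have hg1 : gam α (i+1) (v+1) = α - i - 1/2 + v + 1 := by rw [gam]; push_cast; ring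
        have hg0 : gam α (i+1) v = α - i - 1/2 + v := by rw [gam]; push_cast; ring
        simp only [fA1, hA2, h2f, h3f, Vterm, if_neg (by omega : ¬ (v+2) < 2),
          if_neg (by omega : ¬ (v+2) = 0)]
        rw [show v+2-1 = v+1 from rfl, show v+2-2 = v from rfl, hg1, hg0,
          show ((((v+2):ℕ)):ℤ) = (v:ℤ)+2 by push_cast; ring]
        push_cast
        linear_combination (-(Ecf (gam α (i+1) (v+2)) s * bcz ((N:ℤ)-((v:ℤ)+2)-2*(s:ℤ)))) * lm
  -- assemble
  calc (2*α - i - 1 + N) * Vc α i N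
      = ∑' p, ((2*α-i-1+(N:ℂ)) * Vterm α i N p) := by rw [Vc, tsum_mul_left]
    _ = ∑' p, (g1 α i N p + g2 α i N p + g3 α i N p) := tsum_congr split1
    _ = (∑' p, g1 α i N p) + (∑' p, g2 α i N p) + ∑' p, g3 α i N p := by
        rw [Summable.tsum_add (Sg1.add Sg2) Sg3, Summable.tsum_add Sg1 Sg2]
    _ = ((∑' p, fA1 α i N p) - ∑' p, hA2 α i N p)
          + ((∑' p, h2f α i N p) + ∑' p, h3f α i N p) := by
        rw [tsum_congr e1a, Summable.tsum_sub SfA1 SfA2, e1b, e1c, e2a, tsum_congr e2b, e2c,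
          tsum_congr e3, e3']
        ring
    _ = ∑' p, (fA1 α i N p - hA2 α i N p + (h2f α i N p + h3f α i N p)) := by
        rw [← Summable.tsum_sub SfA1 ShA2, ← Summable.tsum_add Sh2 Sh3,
          ← Summable.tsum_add (SfA1.sub ShA2) (Sh2.add Sh3)]
    _ = ∑' p, ((2*α-i-1) * Vterm α (i+1) N p) := tsum_congr final
    _ = (2*α - i - 1) * Vc α (i+1) N := by rw [Vc, tsum_mul_left]
lemma C1 (α : ℂ) (it : ℕ) (h1 : NotNonposInt (2*α - it))
    (h3 : ∀ m : ℕ, m ≤ it → NotNonposInt (α + m - it + 1/2))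
    (h6 : ∀ m : ℕ, m ≤ it → poch (α - it - 1/2) m ≠ 0) :
    ∀ i, i ≤ it → ∀ N : ℕ, poch α N = Vc α i N * poch (2*α - i) N * N.factorial := by
  have hshift : ∀ k, k ≤ it → NotNonposInt (2*α - k) := by
    intro k hk
    rw [show 2*α-(k:ℂ) = (2*α-it) + ((it-k : ℕ):ℂ) by
      push_cast [Nat.cast_sub hk]; ring]
    exact nni_add_nat h1 _
  have hc : NotNonposInt (α+1/2) := by
    have := h3 it le_rfl
    rwa [show α+(it:ℂ)-it+1/2 = α+1/2 by ring] at this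
  have h20 : NotNonposInt (2*α) := by
    have := hshift 0 (by omega)
    rwa [show 2*α-((0:ℕ):ℂ) = 2*α by push_cast; ring] at this
  have ham : 1 ≤ it → NotNonposInt (α - it - 1/2) := by
    intro hit n hn
    by_cases hcase : n < it
    · apply h6 (n+1) (by omega)
      apply Finset.prod_eq_zero (Finset.mem_range.mpr (by omega : n < n+1))
      linear_combination hn
    · apply h1 (2*n - (it+1))
      have hcz : ((2*n - (it+1) : ℕ):ℂ) = 2*(n:ℂ) - it - 1 := by
        push_cast [Nat.cast_sub (show it+1 ≤ 2*n by omega)]; ring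
      rw [hcz]
      linear_combination 2*hn
  have hga' : ∀ k, k+1 ≤ it → NotNonposInt (α - k - 3/2) := by
    intro k hk
    have base := ham (by omega)
    rw [show α-(k:ℂ)-3/2 = (α-it-1/2) + ((it-(k+1) : ℕ):ℂ) by
      push_cast [Nat.cast_sub hk]; ring]
    exact nni_add_nat base _
  have h2a' : ∀ k, k+1 ≤ it → NotNonposInt (2*α - k - 1) := by
    intro k hk
    have := hshift (k+1) hk
    rwa [show 2*α-((k+1:ℕ):ℂ) = 2*α-k-1 by push_cast; ring] at this
  have Vc0 : ∀ N : ℕ, Vc α 0 N = Kf α (N:ℤ) := by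
    intro N
    rw [Vc, tsum_collapse _ (by
      intro p hp
      rw [Vterm, dcf_vanish α (Nat.pos_of_ne_zero hp)]
      ring)]
    rw [Kf]
    apply tsum_congr
    intro s
    rw [Vterm, dcf_zero, show gam α 0 0 = α+1/2 by rw [gam]; push_cast; ring]
    norm_num
  intro i
  induction i with
  | zero =>
      intro _ N
      rw [Vc0, show (2*α - ((0:ℕ):ℂ)) = 2*α by push_cast; ring]
      exact kummer α h20 hc N
  | succ k ih =>
      intro hk N
      have ihN := ih (by omega) N
      have hst := step_lemma α k (h2a' k hk) (hga' k hk) N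
      have hlow := poch_lower (2*α - k) N
      have hb0 : (2*α-(k:ℂ)-1) ≠ 0 := nni_ne_zero (h2a' k hk)
      rw [show (2*α - ((k+1:ℕ):ℂ)) = 2*α-k-1 by push_cast; ring]
      apply mul_left_cancel₀ hb0
      rw [ihN]
      linear_combination (-(Vc α k N * (N.factorial:ℂ))) * hlow
        + (poch (2*α-k-1) N * (N.factorial:ℂ)) * hst
open Filter in
lemma summable_norm_of_ratio (f g : ℕ → ℂ) (hfg : ∀ k, f (k+1) = f k * g k)
    (C : ℝ) (K : ℕ) (hC : ∀ k, K ≤ k → ‖g k‖ ≤ C/(k+1)) :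
    Summable (fun k => ‖f k‖) := by
  apply summable_of_ratio_norm_eventually_le (r := (1/2 : ℝ)) (by norm_num)
  rw [eventually_atTop]
  refine ⟨max K (⌈2*C⌉₊), fun k hk => ?_⟩
  have hk1 : K ≤ k := le_trans (le_max_left _ _) hk
  have hk2 : 2*C ≤ k+1 := by
    have h1 : (⌈2*C⌉₊ : ℝ) ≤ k := by
      exact_mod_cast Nat.cast_le.mpr (le_trans (le_max_right _ _) hk)
    calc 2*C ≤ ⌈2*C⌉₊ := Nat.le_ceil _
      _ ≤ k := h1
      _ ≤ k+1 := by linarith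
  have hgk : ‖g k‖ ≤ 1/2 := by
    refine le_trans (hC k hk1) ?_
    rw [div_le_div_iff₀ (by positivity) (by norm_num)]
    linarith
  rw [Real.norm_eq_abs, Real.norm_eq_abs, abs_of_nonneg (norm_nonneg _),
    abs_of_nonneg (norm_nonneg _), hfg k, norm_mul]
  calc ‖f k‖ * ‖g k‖ ≤ ‖f k‖ * (1/2) := by
        exact mul_le_mul_of_nonneg_left hgk (norm_nonneg _)
    _ = 1/2 * ‖f k‖ := by ring

lemma norm_add_nat_le (A : ℂ) (k : ℕ) : ‖A + k‖ ≤ ‖A‖ + k := by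
  calc ‖A + k‖ ≤ ‖A‖ + ‖(k:ℂ)‖ := norm_add_le _ _
    _ = ‖A‖ + k := by rw [Complex.norm_natCast]

lemma norm_add_nat_ge (B : ℂ) (k : ℕ) : (k:ℝ) - ‖B‖ ≤ ‖B + k‖ := by
  have h := norm_sub_le (B + k) B
  have h2 : ‖(B + k) - B‖ = (k:ℝ) := by
    rw [show (B + k) - B = (k:ℂ) by ring, Complex.norm_natCast]
  linarith [norm_sub_le (B+k) B, h2.symm.le]

-- summability of 0F1-type coefficient sequences
lemma summable_norm_oneF (c w : ℂ) : Summable (fun k => ‖(1/(poch c k)) * w^k / k.factorial‖) := by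
  refine summable_norm_of_ratio _ (fun k => w/((c+k)*(k+1))) ?_ (2*‖w‖)
    (⌈‖c‖⌉₊ + 1) ?_
  · intro k
    beta_reduce
    rw [poch_succ, Nat.factorial_succ]
    push_cast
    simp only [div_eq_mul_inv, mul_inv, one_mul, one_div, pow_succ]
    ring
  · intro k hk
    have hck : (1:ℝ) ≤ ‖c + k‖ := by
      have h1 : ‖c‖ + 1 ≤ k := by
        have : (⌈‖c‖⌉₊ : ℝ) + 1 ≤ k := by exact_mod_cast hk
        have := Nat.le_ceil ‖c‖
        linarith
      have := norm_add_nat_ge c k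
      linarith
    rw [norm_div, norm_mul]
    have hk1 : ‖((k:ℂ)+1)‖ = (k:ℝ)+1 := by
      rw [show ((k:ℂ)+1) = (((k+1):ℕ):ℂ) by push_cast; ring, Complex.norm_natCast]
      push_cast; ring
    rw [hk1]
    have hpos : (0:ℝ) < (k:ℝ)+1 := by positivity
    rcases eq_or_ne (‖c+k‖ * ((k:ℝ)+1)) 0 with h0 | h0
    · rw [h0, div_zero]; positivity
    · rw [div_le_div_iff₀ (lt_of_le_of_ne (by positivity) (Ne.symm h0)) hpos]
      have : 1 * ((k:ℝ)+1) ≤ ‖c+k‖ * ((k:ℝ)+1) := by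
        apply mul_le_mul_of_nonneg_right hck (by positivity)
      nlinarith [norm_nonneg w]

lemma choose_split (f : ℕ → ℂ) (N : ℕ) :
    ∑ k ∈ Finset.range (N+2), ((N+1).choose k : ℂ) * f k
      = ∑ k ∈ Finset.range (N+1), (N.choose k : ℂ) * f k
        + ∑ k ∈ Finset.range (N+1), (N.choose k : ℂ) * f (k+1) := by
  rw [Finset.sum_range_succ' (fun k => ((N+1).choose k : ℂ) * f k) (N+1)]
  have h1 : ∀ k, (((N+1).choose (k+1) : ℕ) : ℂ) = (N.choose k : ℂ) + (N.choose (k+1) : ℂ) := by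
    intro k
    rw [Nat.choose_succ_succ]
    push_cast; ring
  have h2 : ∑ k ∈ Finset.range (N+1), (((N+1).choose (k+1):ℕ) : ℂ) * f (k+1)
      = ∑ k ∈ Finset.range (N+1), ((N.choose k : ℂ) * f (k+1) + (N.choose (k+1) : ℂ) * f (k+1)) := by
    apply Finset.sum_congr rfl
    intro k _
    rw [h1]; ring
  rw [h2, Finset.sum_add_distrib]
  have h3 : ∑ k ∈ Finset.range (N+1), ((N.choose (k+1)) : ℂ) * f (k+1)
      = ∑ k ∈ Finset.range N, ((N.choose (k+1)) : ℂ) * f (k+1) := by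
    rw [Finset.sum_range_succ, Nat.choose_succ_self]
    simp
  have h4 : ∑ k ∈ Finset.range (N+1), ((N.choose k) : ℂ) * f k
      = (∑ k ∈ Finset.range N, ((N.choose (k+1)) : ℂ) * f (k+1)) + ((N.choose 0 : ℂ)) * f 0 := by
    rw [Finset.sum_range_succ' (fun k => ((N.choose k) : ℂ) * f k) N]
  rw [h3, h4]
  push_cast [Nat.choose_zero_right]
  ring

lemma CV (c d : ℂ) : ∀ N : ℕ,
    ∑ k ∈ Finset.range (N+1), (N.choose k : ℂ) * poch c k * poch d (N-k) = poch (c+d) N := by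
  intro N
  induction N with
  | zero => simp [poch_zero]
  | succ N ih =>
      have hsp := choose_split (fun k => poch c k * poch d (N+1-k)) N
      have hre : ∀ x : ℕ, ((N+1).choose x : ℂ) * poch c x * poch d (N+1-x)
          = ((N+1).choose x : ℂ) * (poch c x * poch d (N+1-x)) := by intro x; ring
      calc ∑ k ∈ Finset.range (N+2), ((N+1).choose k : ℂ) * poch c k * poch d (N+1-k)
          = ∑ k ∈ Finset.range (N+2), ((N+1).choose k : ℂ) * (poch c k * poch d (N+1-k)) := by
            exact Finset.sum_congr rfl (fun k _ => hre k)
        _ = ∑ k ∈ Finset.range (N+1), (N.choose k : ℂ) * (poch c k * poch d (N+1-k))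
            + ∑ k ∈ Finset.range (N+1), (N.choose k : ℂ) * (poch c (k+1) * poch d (N+1-(k+1))) := hsp
        _ = (c+d+N) * ∑ k ∈ Finset.range (N+1), (N.choose k : ℂ) * poch c k * poch d (N-k) := by
            rw [← Finset.sum_add_distrib, Finset.mul_sum]
            apply Finset.sum_congr rfl
            intro k hk
            have hkN : k ≤ N := by
              simp only [Finset.mem_range] at hk; omega
            have e1 : poch d (N+1-k) = poch d (N-k) * (d + ((N-k : ℕ):ℂ)) := by
              rw [show N+1-k = (N-k)+1 by omega, poch_succ]
            have e2 : poch c (k+1) = poch c k * (c + k) := poch_succ c k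
            have e3 : N+1-(k+1) = N-k := by omega
            have e4 : ((N-k : ℕ):ℂ) = (N:ℂ) - k := by
              push_cast [Nat.cast_sub hkN]; ring
            rw [e1, e3, e2, e4]
            ring
        _ = poch (c+d) (N+1) := by rw [ih, poch_succ]; ring

lemma F2core (a b : ℂ) (N : ℕ) :
    ∑ k ∈ Finset.range (N+1), (N.choose k : ℂ) * poch (a+k) (N-k) * poch (b+((N-k:ℕ):ℂ)) k
      = poch (a+b+N-1) N := by
  have key : ∀ k, k ≤ N → (N.choose k : ℂ) * poch (a+k) (N-k) * poch (b+((N-k:ℕ):ℂ)) k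
      = (-1:ℂ)^N * ((N.choose k : ℂ) * poch (1-b-N) k * poch (1-a-N) (N-k)) := by
    intro k hk
    have e4 : ((N-k : ℕ):ℂ) = (N:ℂ) - k := by push_cast [Nat.cast_sub hk]; ring
    have r1 : poch (a+k) (N-k) = (-1)^(N-k) * poch (1-a-N) (N-k) := by
      rw [poch_reflect (a+k) (N-k)]
      congr 2
      rw [e4]; ring
    have r2 : poch (b+((N-k:ℕ):ℂ)) k = (-1)^k * poch (1-b-N) k := by
      rw [poch_reflect (b+((N-k:ℕ):ℂ)) k]
      congr 2
      rw [e4]; push_cast; ring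
    have hs : (-1:ℂ)^(N-k) * (-1:ℂ)^k = (-1)^N := by
      rw [← pow_add, Nat.sub_add_cancel hk]
    rw [r1, r2]
    linear_combination ((N.choose k : ℂ) * poch (1-a-(N:ℂ)) (N-k) * poch (1-b-(N:ℂ)) k) * hs
  calc ∑ k ∈ Finset.range (N+1), (N.choose k : ℂ) * poch (a+k) (N-k) * poch (b+((N-k:ℕ):ℂ)) k
      = ∑ k ∈ Finset.range (N+1), (-1:ℂ)^N * ((N.choose k : ℂ) * poch (1-b-N) k * poch (1-a-N) (N-k)) := by
        apply Finset.sum_congr rfl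
        intro k hk
        exact key k (by simp only [Finset.mem_range] at hk; omega)
    _ = (-1:ℂ)^N * poch ((1-b-N)+(1-a-N)) N := by
        rw [← Finset.mul_sum, CV]
    _ = poch (a+b+N-1) N := by
        rw [show (1-b-(N:ℂ))+(1-a-N) = 2-a-b-2*N by ring, poch_reflect (2-a-b-2*N) N,
          show (1-(2-a-b-2*(N:ℂ))-N) = a+b+N-1 by ring, ← mul_assoc, ← pow_add]
        simp [← two_mul, pow_mul]

lemma poch_dup (c : ℂ) (N : ℕ) : poch c (2*N) = 4^N * poch (c/2) N * poch ((c+1)/2) N := by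
  induction N with
  | zero => simp [poch_zero]
  | succ N ih =>
      have e1 : poch c (2*(N+1)) = poch c (2*N) * (c+2*N) * (c+(2*N+1)) := by
        rw [show 2*(N+1) = (2*N+1)+1 by omega, poch_succ, poch_succ]
        push_cast
        ring
      rw [e1, ih, poch_succ, poch_succ]
      push_cast
      ring
lemma F2 (a b : ℂ) (ha : NotNonposInt a) (hb : NotNonposInt b)
    (hab : NotNonposInt (a+b-1)) (n : ℕ) :
    ∑ k ∈ Finset.range (n+1),
        1/(poch a k * poch b (n-k) * (k.factorial:ℂ) * ((n-k).factorial:ℂ))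
      = 4^n * poch ((a+b)/2) n * poch ((a+b-1)/2) n
          / (poch a n * poch b n * poch (a+b-1) n * (n.factorial:ℂ)) := by
  have hfz : ∀ m : ℕ, ((m.factorial : ℕ):ℂ) ≠ 0 :=
    fun m => Nat.cast_ne_zero.mpr (Nat.factorial_ne_zero m)
  have hD : poch a n * poch b n * (n.factorial:ℂ) ≠ 0 :=
    mul_ne_zero (mul_ne_zero (poch_ne_zero ha n) (poch_ne_zero hb n)) (hfz n)
  have step1 : ∑ k ∈ Finset.range (n+1),
      1/(poch a k * poch b (n-k) * (k.factorial:ℂ) * ((n-k).factorial:ℂ))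
      = poch (a+b+n-1) n / (poch a n * poch b n * (n.factorial:ℂ)) := by
    rw [← F2core a b n, Finset.sum_div]
    apply Finset.sum_congr rfl
    intro k hk
    have hkn : k ≤ n := by simp only [Finset.mem_range] at hk; omega
    have hd1 : poch a k * poch b (n-k) * (k.factorial:ℂ) * ((n-k).factorial:ℂ) ≠ 0 :=
      mul_ne_zero (mul_ne_zero (mul_ne_zero (poch_ne_zero ha k)
        (poch_ne_zero hb (n-k))) (hfz k)) (hfz (n-k))
    rw [div_eq_div_iff hd1 hD]
    have ea : poch a n = poch a k * poch (a+k) (n-k) := by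
      rw [← poch_add a k (n-k), Nat.add_sub_cancel' hkn]
    have eb : poch b n = poch b (n-k) * poch (b+((n-k:ℕ):ℂ)) k := by
      rw [← poch_add b (n-k) k, show (n-k)+k = n by omega]
    have en : ((n.factorial : ℕ):ℂ) = (n.choose k : ℂ) * (k.factorial:ℂ) * ((n-k).factorial:ℂ) := by
      rw [← Nat.choose_mul_factorial_mul_factorial hkn]
      push_cast
      ring
    rw [ea, eb, en]
    ring
  rw [step1]
  have hdup := poch_dup (a+b-1) n
  have hpadd := poch_add (a+b-1) n n
  rw [two_mul] at hdup
  rw [show a+b-1+(n:ℂ) = a+b+n-1 by ring] at hpadd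
  rw [show (a+b-1+1)/2 = (a+b)/2 by ring] at hdup
  have key : poch (a+b-1) n * poch (a+b+n-1) n
      = 4^n * poch ((a+b)/2) n * poch ((a+b-1)/2) n := by
    rw [← hpadd, hdup]
    ring
  rw [div_eq_div_iff hD (mul_ne_zero (mul_ne_zero (mul_ne_zero (poch_ne_zero ha n)
    (poch_ne_zero hb n)) (poch_ne_zero hab n)) (hfz n))]
  linear_combination (poch a n * poch b n * ((n.factorial : ℕ):ℂ)) * key

lemma pFq0 (c w : ℂ) : pFq [] [c] w = ∑' k, 1/(poch c k) * w^k / (k.factorial:ℂ) := by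
  rw [pFq]
  apply tsum_congr
  intro k
  simp

lemma lemB (a b w : ℂ) (ha : NotNonposInt a) (hb : NotNonposInt b)
    (hab : NotNonposInt (a+b-1)) :
    pFq [] [a] w * pFq [] [b] w = pFq [(a+b)/2, (a+b-1)/2] [a, b, a+b-1] (4*w) := by
  rw [pFq0, pFq0,
    tsum_mul_tsum_eq_tsum_sum_antidiagonal_of_summable_norm
      (summable_norm_oneF a w) (summable_norm_oneF b w), pFq]
  apply tsum_congr
  intro n
  rw [Finset.Nat.sum_antidiagonal_eq_sum_range_succ_mk]
  have hterm : ∀ k ∈ Finset.range (n+1),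
      (1/(poch a k) * w^k / (k.factorial:ℂ)) * (1/(poch b (n-k)) * w^(n-k) / (((n-k).factorial:ℕ):ℂ))
      = w^n * (1/(poch a k * poch b (n-k) * (k.factorial:ℂ) * ((n-k).factorial:ℂ))) := by
    intro k hk
    have hkn : k ≤ n := by simp only [Finset.mem_range] at hk; omega
    have hw : w^k * w^(n-k) = w^n := by
      rw [← pow_add]
      congr 1
      omega
    simp only [div_eq_mul_inv, mul_inv, one_mul]
    rw [← hw]
    ring
  rw [Finset.sum_congr rfl hterm, ← Finset.mul_sum, F2 a b ha hb hab n]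
  simp only [List.map_cons, List.map_nil, List.prod_cons, List.prod_nil, mul_one]
  rw [mul_pow]
  simp only [div_eq_mul_inv, mul_inv]
  ring

noncomputable def fmc (α : ℂ) (i m k : ℕ) : ℂ :=
  if m ≤ k ∧ (k-m) % 2 = 0 then dcf α i m * Ecf (gam α i m) ((k-m)/2) else 0

lemma exp_half (x : ℂ) : Complex.exp (x/2) = ∑' r : ℕ, ecoef r * x^r := by
  rw [Complex.exp_eq_exp_ℂ, NormedSpace.exp_eq_tsum_div]
  apply tsum_congr
  intro r
  rw [ecoef, div_pow]
  simp only [div_eq_mul_inv, mul_inv, one_pow, one_mul]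
  simp only [one_div, inv_pow]
  ring

lemma summable_norm_exp (x : ℂ) : Summable (fun r => ‖ecoef r * x^r‖) := by
  refine summable_norm_of_ratio _ (fun r => x/(2*((r:ℂ)+1))) ?_ ‖x‖ 0 ?_
  · intro r
    beta_reduce
    have h2 : (2*((r:ℂ)+1)) ≠ 0 := by
      apply mul_ne_zero two_ne_zero (Nat.cast_add_one_ne_zero r)
    have he := ecoef_succ r
    field_simp
    rw [pow_succ]
    linear_combination (-(x^(r+1))) * he
  · intro r _
    beta_reduce
    rw [norm_div]
    have h1 : ‖(2*((r:ℂ)+1))‖ = 2*((r:ℝ)+1) := by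
      rw [show (2*((r:ℂ)+1)) = (((2*(r+1)):ℕ):ℂ) by push_cast; ring, Complex.norm_natCast]
      push_cast; ring
    rw [h1, div_le_div_iff₀ (by positivity) (by positivity)]
    nlinarith [norm_nonneg x]

lemma summable_norm_Ecf (c A x2 : ℂ) : Summable (fun s => ‖A * Ecf c s * x2^s‖) := by
  refine summable_norm_of_ratio _ (fun s => x2/(16*(c+s)*((s:ℂ)+1))) ?_ (2*‖x2‖)
    (⌈‖c‖⌉₊ + 16) ?_
  · intro s
    beta_reduce
    rw [Ecf_succ, pow_succ]
    simp only [div_eq_mul_inv, mul_inv, one_mul]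
    ring
  · intro s hs
    beta_reduce
    have hck : (1:ℝ) ≤ ‖c + s‖ := by
      have h1 : ‖c‖ + 1 ≤ s := by
        have : (⌈‖c‖⌉₊ : ℝ) + 16 ≤ s := by exact_mod_cast hs
        have := Nat.le_ceil ‖c‖
        linarith
      have := norm_add_nat_ge c s
      linarith
    rw [norm_div, norm_mul, norm_mul]
    have hs1 : ‖((s:ℂ)+1)‖ = (s:ℝ)+1 := by
      rw [show ((s:ℂ)+1) = (((s+1):ℕ):ℂ) by push_cast; ring, Complex.norm_natCast]
      push_cast; ring
    have h16 : ‖(16:ℂ)‖ = 16 := by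
      rw [show (16:ℂ) = ((16:ℕ):ℂ) by norm_num, Complex.norm_natCast]
      norm_num
    rw [hs1, h16]
    have hpos : (0:ℝ) < (s:ℝ)+1 := by positivity
    have hden : (0:ℝ) < 16 * ‖c+s‖ * ((s:ℝ)+1) := by
      have : (0:ℝ) < ‖c+s‖ := by linarith
      positivity
    rw [div_le_div_iff₀ hden hpos]
    have h0 : (0:ℝ) ≤ ‖x2‖ * ((s:ℝ)+1) := by positivity
    have h1 : ‖x2‖ * ((s:ℝ)+1) ≤ (‖x2‖ * ((s:ℝ)+1)) * ‖c+s‖ := le_mul_of_one_le_right h0 hck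
    nlinarith [h0, h1]

lemma fmc_mul_ne (α : ℂ) (i m k : ℕ) (x : ℂ) (h : fmc α i m k * x^k ≠ 0) :
    m ≤ k ∧ (k-m) % 2 = 0 := by
  by_contra hc
  rw [fmc, if_neg hc] at h
  simp at h

lemma xm0F1 (α : ℂ) (i m : ℕ) (x : ℂ) :
    dcf α i m * x^m * pFq [] [gam α i m] (x^2/16) = ∑' k : ℕ, fmc α i m k * x^k := by
  rw [pFq0, ← tsum_mul_left]
  have hterm : ∀ s : ℕ, dcf α i m * x^m * (1/(poch (gam α i m) s) * (x^2/16)^s / (s.factorial:ℂ))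
      = dcf α i m * Ecf (gam α i m) s * x^(m+2*s) := by
    intro s
    rw [Ecf, div_pow, pow_add, pow_mul]
    simp only [div_eq_mul_inv, mul_inv, one_mul]
    ring
  rw [tsum_congr hterm]
  apply tsum_eq_tsum_of_ne_zero_bij (fun y => (y.1 - m)/2)
  · rintro ⟨k1, hk1⟩ ⟨k2, hk2⟩ h12
    obtain ⟨a1, b1⟩ := fmc_mul_ne α i m k1 x hk1
    obtain ⟨a2, b2⟩ := fmc_mul_ne α i m k2 x hk2
    simp only at h12
    apply Subtype.ext
    simp only
    omega
  · intro s hs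
    refine ⟨⟨m+2*s, ?_⟩, ?_⟩
    · have : fmc α i m (m+2*s) = dcf α i m * Ecf (gam α i m) s := by
        rw [fmc, if_pos (by omega)]
        congr 2
        omega
      simpa [this] using hs
    · simp only
      omega
  · rintro ⟨k, hk⟩
    have g := fmc_mul_ne α i m k x hk
    simp only
    rw [fmc, if_pos g]
    have : m + 2*((k-m)/2) = k := by omega
    rw [this]

lemma summable_fmc (α : ℂ) (i m : ℕ) (x : ℂ) :
    Summable (fun k => ‖fmc α i m k * x^k‖) := by
  have hS : Summable (fun s => ‖(dcf α i m * x^m) * Ecf (gam α i m) s * (x^2)^s‖) :=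
    summable_norm_Ecf (gam α i m) (dcf α i m * x^m) (x^2)
  have hinj : Function.Injective (fun s : ℕ => m + 2*s) := by
    intro s1 s2 h
    simp only at h
    omega
  rw [← Function.Injective.summable_iff hinj (by
    intro k hk
    by_contra h0
    have g := fmc_mul_ne α i m k x (by
      intro hz
      apply h0
      rw [hz, norm_zero])
    apply hk
    exact ⟨(k-m)/2, by simp only; omega⟩)]
  apply Summable.congr hS
  intro s
  simp only [Function.comp]
  have h1 : fmc α i m (m+2*s) = dcf α i m * Ecf (gam α i m) s := by
    rw [fmc, if_pos (by omega)]
    congr 2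
    omega
  rw [h1, pow_add, pow_mul]
  ring_nf

lemma ecoef_ne_zero (r : ℕ) : ecoef r ≠ 0 := by
  rw [ecoef]
  exact div_ne_zero (pow_ne_zero _ (by norm_num)) (Nat.cast_ne_zero.mpr (Nat.factorial_ne_zero r))

lemma bridge (α : ℂ) (i N : ℕ) (x : ℂ) :
    ∑ kl ∈ Finset.HasAntidiagonal.antidiagonal N,
        (ecoef kl.1 * x^kl.1) * ((∑ m ∈ Finset.range (i+1), fmc α i m kl.2) * x^kl.2)
      = Vc α i N * x^N := by
  have hxpow : ∀ kl ∈ Finset.HasAntidiagonal.antidiagonal N,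
      (ecoef kl.1 * x^kl.1) * ((∑ m ∈ Finset.range (i+1), fmc α i m kl.2) * x^kl.2)
      = (ecoef kl.1 * ∑ m ∈ Finset.range (i+1), fmc α i m kl.2) * x^N := by
    rintro ⟨k, l⟩ hkl
    rw [Finset.HasAntidiagonal.mem_antidiagonal] at hkl
    have : x^k * x^l = x^N := by rw [← pow_add, hkl]
    rw [← this]
    ring
  rw [Finset.sum_congr rfl hxpow, ← Finset.sum_mul]
  congr 1
  -- key combinatorial bridge
  have Tm : ∀ m, ∑ k ∈ Finset.range (N+1), ecoef k * fmc α i m (N-k)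
      = ∑ s ∈ Finset.range (N+1),
          dcf α i m * Ecf (gam α i m) s * bcz ((N:ℤ) - m - 2*s) := by
    intro m
    apply Finset.sum_bij_ne_zero (i := fun k _ _ => (N-k-m)/2)
    · intro k hk hne
      simp only [Finset.mem_range] at hk ⊢
      omega
    · intro k1 hk1 hne1 k2 hk2 hne2 h12
      have g1 : m ≤ N-k1 ∧ (N-k1-m) % 2 = 0 := by
        by_contra hc
        rw [fmc, if_neg hc, mul_zero] at hne1
        exact hne1 rfl
      have g2 : m ≤ N-k2 ∧ (N-k2-m) % 2 = 0 := by
        by_contra hc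
        rw [fmc, if_neg hc, mul_zero] at hne2
        exact hne2 rfl
      simp only [Finset.mem_range] at hk1 hk2
      omega
    · intro s hs hgs
      have hle : m + 2*s ≤ N := by
        by_contra hc
        rw [bcz_neg (by omega : (N:ℤ) - m - 2*(s:ℕ) < 0), mul_zero] at hgs
        exact hgs rfl
      refine ⟨N - m - 2*s, Finset.mem_range.mpr (by omega), ?_, by omega⟩
      have hfm : fmc α i m (N - (N-m-2*s)) = dcf α i m * Ecf (gam α i m) s := by
        rw [show N - (N-m-2*s) = m + 2*s by omega, fmc, if_pos (by omega)]
        congr 2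
        omega
      rw [hfm]
      intro hz
      apply hgs
      have hb : bcz ((N:ℤ) - m - 2*(s:ℕ)) = ecoef (N-m-2*s) := by
        rw [show (N:ℤ) - m - 2*(s:ℕ) = ((N-m-2*s : ℕ) : ℤ) by omega, bcz_natCast]
      rcases mul_eq_zero.mp hz with h | h
      · exact absurd h (ecoef_ne_zero _)
      · rw [h, hb]
        ring
    · intro k hk hne
      have g : m ≤ N-k ∧ (N-k-m) % 2 = 0 := by
        by_contra hc
        rw [fmc, if_neg hc, mul_zero] at hne
        exact hne rfl
      simp only [Finset.mem_range] at hk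
      rw [fmc, if_pos g]
      have hb : bcz ((N:ℤ) - m - 2*(((N-k-m)/2 : ℕ):ℤ)) = ecoef k := by
        rw [show (N:ℤ) - m - 2*(((N-k-m)/2 : ℕ):ℤ) = ((k:ℕ):ℤ) by omega, bcz_natCast]
      rw [hb]
      ring
  have hVc : Vc α i N = ∑ m ∈ Finset.range (i+1), ∑ s ∈ Finset.range (N+1),
      dcf α i m * Ecf (gam α i m) s * bcz ((N:ℤ) - m - 2*s) := by
    rw [Vc, tsum_eq_sum (s := Finset.range (i+1) ×ˢ Finset.range (N+1)) (by
      rintro ⟨m, s⟩ hp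
      simp only [Finset.mem_product, Finset.mem_range, not_and_or, not_lt] at hp
      rcases hp with h | h
      · rw [Vterm, dcf_vanish α (by omega : i < m)]
        ring
      · rw [Vterm, bcz_neg (by simp only; omega)]
        ring)]
    rw [Finset.sum_product]
    rfl
  rw [hVc, Finset.Nat.sum_antidiagonal_eq_sum_range_succ_mk]
  rw [Finset.sum_congr rfl (fun k _ => by rw [Finset.mul_sum] :
    ∀ k ∈ Finset.range (N+1), ecoef k * (∑ m ∈ Finset.range (i+1), fmc α i m (N-k))
      = ∑ m ∈ Finset.range (i+1), ecoef k * fmc α i m (N-k))]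
  rw [Finset.sum_comm]
  exact Finset.sum_congr rfl (fun m _ => Tm m)

lemma lemA (α x : ℂ) (i : ℕ)
    (h1 : NotNonposInt (2*α - i))
    (h3 : ∀ m : ℕ, m ≤ i → NotNonposInt (α + m - i + 1/2))
    (h6 : ∀ m : ℕ, m ≤ i → poch (α - i - 1/2) m ≠ 0) :
    pFq [α] [2*α - i] x
      = Complex.exp (x/2) * ∑ m ∈ Finset.range (i+1),
          dcf α i m * x^m * pFq [] [gam α i m] (x^2/16) := by
  have hC1 := C1 α i h1 h3 h6 i le_rfl
  have hP : ∀ N : ℕ, poch (2*α - i) N ≠ 0 := poch_ne_zero h1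
  have SH : Summable (fun k => ‖(∑ m ∈ Finset.range (i+1), fmc α i m k) * x^k‖) := by
    have hmaj : Summable (fun k => ∑ m ∈ Finset.range (i+1), ‖fmc α i m k * x^k‖) :=
      summable_sum (fun m _ => summable_fmc α i m x)
    apply Summable.of_nonneg_of_le (fun k => norm_nonneg _) _ hmaj
    intro k
    rw [Finset.sum_mul]
    exact norm_sum_le _ _
  calc pFq [α] [2*α - i] x
      = ∑' N : ℕ, Vc α i N * x^N := by
        rw [pFq]
        apply tsum_congr
        intro N
        simp only [List.map_cons, List.map_nil, List.prod_cons, List.prod_nil, mul_one]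
        rw [hC1 N]
        have hF : ((N.factorial : ℕ):ℂ) ≠ 0 := Nat.cast_ne_zero.mpr (Nat.factorial_ne_zero N)
        rw [show Vc α i N * poch (2*α-↑i) N * ((N.factorial : ℕ):ℂ)
            = Vc α i N * ((N.factorial : ℕ):ℂ) * poch (2*α-↑i) N by ring,
          mul_div_cancel_right₀ _ (hP N),
          show Vc α i N * ((N.factorial : ℕ):ℂ) * x^N
            = Vc α i N * x^N * ((N.factorial : ℕ):ℂ) by ring,
          mul_div_cancel_right₀ _ hF]
    _ = ∑' N : ℕ, ∑ kl ∈ Finset.HasAntidiagonal.antidiagonal N,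
          (ecoef kl.1 * x^kl.1) * ((∑ m ∈ Finset.range (i+1), fmc α i m kl.2) * x^kl.2) := by
        exact (tsum_congr (fun N => bridge α i N x)).symm
    _ = (∑' r : ℕ, ecoef r * x^r) * ∑' k : ℕ, (∑ m ∈ Finset.range (i+1), fmc α i m k) * x^k := by
        exact (tsum_mul_tsum_eq_tsum_sum_antidiagonal_of_summable_norm
          (summable_norm_exp x) SH).symm
    _ = Complex.exp (x/2) * ∑ m ∈ Finset.range (i+1),
          dcf α i m * x^m * pFq [] [gam α i m] (x^2/16) := by
        rw [← exp_half]
        congr 1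
        rw [Finset.sum_congr rfl (fun m _ => xm0F1 α i m x)]
        rw [← Summable.tsum_finsetSum (fun m _ => (summable_fmc α i m x).of_norm)]
        apply tsum_congr
        intro k
        rw [Finset.sum_mul]

lemma term_eq (α β x : ℂ) (i j m n : ℕ) (hm : m ≤ i) (hn : n ≤ j)
    (h3 : ∀ m : ℕ, m ≤ i → NotNonposInt (α + m - i + 1/2))
    (h4 : ∀ n : ℕ, n ≤ j → NotNonposInt (β + n - j + 1/2))
    (h5 : ∀ m n : ℕ, m ≤ i → n ≤ j → NotNonposInt (α + β + m + n - i - j)) :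
    (dcf α i m * x^m * pFq [] [gam α i m] (x^2/16))
      * (dcf β j n * x^n * pFq [] [gam β j n] (x^2/16))
    = ((-1) ^ (m+n) * poch (-(i:ℂ)) m * poch (-(j:ℂ)) n
        * poch (2*α - 2*i - 1) m * poch (2*β - 2*j - 1) n * x ^ (m+n)) /
      (poch (2*α - i) m * poch (2*β - j) n * poch (α - i - 1/2) m * poch (β - j - 1/2) n
        * 2 ^ (2*m + 2*n) * (Nat.factorial m) * (Nat.factorial n)) *
      pFq [(α+β+m+n-i-j+1)/2, (α+β+m+n-i-j)/2]
          [α+m-i+1/2, β+n-j+1/2, α+β+m+n-i-j] (x^2/4) := by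
  have ha : NotNonposInt (gam α i m) := h3 m hm
  have hb : NotNonposInt (gam β j n) := h4 n hn
  have hab : NotNonposInt (gam α i m + gam β j n - 1) := by
    rw [show gam α i m + gam β j n - 1 = α+β+(m:ℂ)+n-i-j by
      simp only [gam]; push_cast; ring]
    exact h5 m n hm hn
  have hB := lemB (gam α i m) (gam β j n) (x^2/16) ha hb hab
  rw [show (4:ℂ)*(x^2/16) = x^2/4 by ring] at hB
  rw [show (gam α i m + gam β j n)/2 = (α+β+(m:ℂ)+n-i-j+1)/2 by
    simp only [gam]; push_cast; ring] at hB
  rw [show (gam α i m + gam β j n - 1)/2 = (α+β+(m:ℂ)+n-i-j)/2 by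
    simp only [gam]; push_cast; ring] at hB
  rw [show gam α i m + gam β j n - 1 = α+β+(m:ℂ)+n-i-j by
    simp only [gam]; push_cast; ring] at hB
  rw [show gam α i m = α+(m:ℂ)-i+1/2 by simp only [gam]] at hB
  rw [show gam β j n = β+(n:ℂ)-j+1/2 by simp only [gam]] at hB
  have hcoef : ((-1:ℂ) ^ (m+n) * poch (-(i:ℂ)) m * poch (-(j:ℂ)) n
        * poch (2*α - 2*i - 1) m * poch (2*β - 2*j - 1) n * x ^ (m+n)) /
      (poch (2*α - i) m * poch (2*β - j) n * poch (α - i - 1/2) m * poch (β - j - 1/2) n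
        * 2 ^ (2*m + 2*n) * (Nat.factorial m) * (Nat.factorial n))
      = (dcf α i m * x^m) * (dcf β j n * x^n) := by
    rw [dcf, dcf]
    simp only [div_eq_mul_inv, mul_inv, pow_add]
    ring
  rw [show gam α i m = α+(m:ℂ)-i+1/2 by simp only [gam],
    show gam β j n = β+(n:ℂ)-j+1/2 by simp only [gam], hcoef, ← hB]
  ring

end Bailey


theorem bailey_generalization_2_2 (i j : ℕ) (x α β : ℂ)
    (h1 : NotNonposInt (2*α - i)) (h2 : NotNonposInt (2*β - j))
    (h3 : ∀ m : ℕ, m ≤ i → NotNonposInt (α + m - i + 1/2))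
    (h4 : ∀ n : ℕ, n ≤ j → NotNonposInt (β + n - j + 1/2))
    (h5 : ∀ m n : ℕ, m ≤ i → n ≤ j → NotNonposInt (α + β + m + n - i - j))
    (h6 : ∀ m : ℕ, m ≤ i → poch (α - i - 1/2) m ≠ 0)
    (h7 : ∀ n : ℕ, n ≤ j → poch (β - j - 1/2) n ≠ 0) :
    pFq [α] [2*α - i] x * pFq [β] [2*β - j] x =
      Complex.exp x *
        ∑ m ∈ Finset.range (i+1), ∑ n ∈ Finset.range (j+1),
          ((-1) ^ (m+n) * poch (-(i:ℂ)) m * poch (-(j:ℂ)) n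
              * poch (2*α - 2*i - 1) m * poch (2*β - 2*j - 1) n * x ^ (m+n)) /
            (poch (2*α - i) m * poch (2*β - j) n * poch (α - i - 1/2) m * poch (β - j - 1/2) n
              * 2 ^ (2*m + 2*n) * (Nat.factorial m) * (Nat.factorial n)) *
          pFq [(α+β+m+n-i-j+1)/2, (α+β+m+n-i-j)/2]
              [α+m-i+1/2, β+n-j+1/2, α+β+m+n-i-j] (x^2/4) := by
  rw [Bailey.lemA α x i h1 h3 h6, Bailey.lemA β x j h2 h4 h7]
  have hexp : Complex.exp (x/2) * Complex.exp (x/2) = Complex.exp x := by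
    rw [← Complex.exp_add]
    norm_num
  have key : (∑ m ∈ Finset.range (i+1), Bailey.dcf α i m * x^m * pFq [] [Bailey.gam α i m] (x^2/16))
      * (∑ n ∈ Finset.range (j+1), Bailey.dcf β j n * x^n * pFq [] [Bailey.gam β j n] (x^2/16))
      = ∑ m ∈ Finset.range (i+1), ∑ n ∈ Finset.range (j+1),
          ((-1) ^ (m+n) * poch (-(i:ℂ)) m * poch (-(j:ℂ)) n
              * poch (2*α - 2*i - 1) m * poch (2*β - 2*j - 1) n * x ^ (m+n)) /
            (poch (2*α - i) m * poch (2*β - j) n * poch (α - i - 1/2) m * poch (β - j - 1/2) n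
              * 2 ^ (2*m + 2*n) * (Nat.factorial m) * (Nat.factorial n)) *
          pFq [(α+β+m+n-i-j+1)/2, (α+β+m+n-i-j)/2]
              [α+m-i+1/2, β+n-j+1/2, α+β+m+n-i-j] (x^2/4) := by
    rw [Finset.sum_mul_sum]
    apply Finset.sum_congr rfl
    intro m hm
    apply Finset.sum_congr rfl
    intro n hn
    exact Bailey.term_eq α β x i j m n
      (by simp only [Finset.mem_range] at hm; omega)
      (by simp only [Finset.mem_range] at hn; omega) h3 h4 h5
  calc (Complex.exp (x/2) * ∑ m ∈ Finset.range (i+1),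
          Bailey.dcf α i m * x^m * pFq [] [Bailey.gam α i m] (x^2/16))
      * (Complex.exp (x/2) * ∑ n ∈ Finset.range (j+1),
          Bailey.dcf β j n * x^n * pFq [] [Bailey.gam β j n] (x^2/16))
      = (Complex.exp (x/2) * Complex.exp (x/2))
        * ((∑ m ∈ Finset.range (i+1), Bailey.dcf α i m * x^m * pFq [] [Bailey.gam α i m] (x^2/16))
          * (∑ n ∈ Finset.range (j+1), Bailey.dcf β j n * x^n * pFq [] [Bailey.gam β j n] (x^2/16))) := by
        ring
    _ = Complex.exp x * _ := by rw [hexp, key]
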